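/- Let k be a field, d ≥ 1, and let G be a subgroup of GL (Fin d) k. Let F be the k-subalgebra of the algebra of functions G → k (with pointwise operations) generated by the coordinate functions g ↦ ((g : Matrix (Fin d) (Fin d) k) i j) and g ↦ (((g⁻¹ : G) : Matrix (Fin d) (Fin d) k) i j) for i, j ∈ Fin d. Then for every nonzero element x of the group algebra MonoidAlgebra k G there exists f ∈ F such that Σ_{g ∈ x.support} (x g) * (f g) ≠ 0. (Right-faithfulness of the group algebra model (kG, w, ν) of Proposition 2.2 (i): the subalgebra generated by the coefficients of the fundamental representation is dense in (kG)*.) -/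

import Mathlib

open Matrix

/-- right-faithfulness of the group algebra model, Proposition 2.2 (i):
for a subgroup `G ⊆ GL(d, k)`, the subalgebra `F` of the algebra of functions `G → k`
generated by the coordinate functions `g ↦ g i j` and `g ↦ (g⁻¹) i j` is dense in
`(kG)* = k(G)`: every nonzero element of the group algebra `kG` is non-annihilated by
some `f ∈ F`. -/
theorem stmt18 {k : Type*} [Field k] {d : ℕ} (hd : 1 ≤ d)
    (G : Subgroup (GL (Fin d) k)) :
    ∀ x : MonoidAlgebra k G, x ≠ 0 →
      ∃ f ∈ Algebra.adjoin k
        {f : G → k | ∃ i j : Fin d,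
          (f = fun g : G => (g : GL (Fin d) k).val i j) ∨
          (f = fun g : G => ((g⁻¹ : G) : GL (Fin d) k).val i j)},
        (∑ g ∈ x.coeff.support, x.coeff g * f g) ≠ 0 := by
  intro x hx
  set F := Algebra.adjoin k
        {f : G → k | ∃ i j : Fin d,
          (f = fun g : G => (g : GL (Fin d) k).val i j) ∨
          (f = fun g : G => ((g⁻¹ : G) : GL (Fin d) k).val i j)} with hF
  obtain ⟨g0, hg0⟩ : x.coeff.support.Nonempty :=
    Finsupp.support_nonempty_iff.mpr (fun h => hx (MonoidAlgebra.coeff_eq_zero.mp h))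
  -- for every h ≠ g0 there is φ ∈ F with φ g0 = 1, φ h = 0
  have sep : ∀ h : G, ∃ φ : G → k, φ ∈ F ∧ (h ≠ g0 → (φ g0 = 1 ∧ φ h = 0)) := by
    intro h
    by_cases hh : h = g0
    · exact ⟨1, Subalgebra.one_mem F, fun hc => absurd hh hc⟩
    · -- matrices differ at some coordinate
      have hne : ((g0 : GL (Fin d) k).val : Matrix (Fin d) (Fin d) k)
          ≠ ((h : GL (Fin d) k).val : Matrix (Fin d) (Fin d) k) := by
        intro he
        exact (Ne.symm hh) (Subtype.ext (Units.ext he))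
      have : ∃ i j : Fin d, (g0 : GL (Fin d) k).val i j ≠ (h : GL (Fin d) k).val i j := by
        by_contra hcon
        push_neg at hcon
        exact hne (by ext i j; exact hcon i j)
      obtain ⟨i, j, hij⟩ := this
      set c : G → k := fun g : G => (g : GL (Fin d) k).val i j with hc
      have hcF : c ∈ F := Algebra.subset_adjoin ⟨i, j, Or.inl rfl⟩
      set a : k := c g0 - c h with ha
      have ha0 : a ≠ 0 := sub_ne_zero.mpr hij
      refine ⟨a⁻¹ • (c - algebraMap k (G → k) (c h)), ?_, ?_⟩
      · exact Subalgebra.smul_mem F (sub_mem hcF (Subalgebra.algebraMap_mem F (c h))) a⁻¹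
      · intro _
        constructor
        · show a⁻¹ * (c g0 - c h) = 1
          rw [← ha]; exact inv_mul_cancel₀ ha0
        · show a⁻¹ * (c h - c h) = 0
          rw [sub_self, mul_zero]
  classical
  choose φ hφF hφ using sep
  refine ⟨∏ h ∈ x.coeff.support.erase g0, φ h, prod_mem (fun h _ => hφF h), ?_⟩
  have hval : ∀ g ∈ x.coeff.support, g ≠ g0 → x.coeff g * (∏ h ∈ x.coeff.support.erase g0, φ h) g = 0 := by
    intro g hg hgne
    rw [Finset.prod_apply]
    have h0 : (∏ h ∈ x.coeff.support.erase g0, φ h g) = 0 :=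
      Finset.prod_eq_zero (Finset.mem_erase.mpr ⟨hgne, hg⟩) ((hφ g hgne).2)
    rw [h0, mul_zero]
  rw [Finset.sum_eq_single g0 hval (fun h => absurd hg0 h)]
  rw [Finset.prod_apply]
  have h1 : (∏ h ∈ x.coeff.support.erase g0, φ h g0) = 1 :=
    Finset.prod_eq_one (fun h hh => (hφ h (Finset.mem_erase.mp hh).1).1)
  rw [h1, mul_one]
  exact Finsupp.mem_support_iff.mp hg0
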